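/- Let ρ, τ be density operators with k := D_max(ρ‖τ), and suppose P(τ, φ⁺_m) ≤ √ε/2 for a pure state φ⁺_m. Then for n ≥ 2^{k+2}/ε, the state ρ^{(n)} := (1/n)ρ + ((n−1)/n)τ satisfies P(ρ^{(n)}, φ⁺_m) ≤ √ε, and hence F_U(ρ^{(n)}, φ⁺_m) ≥ 1 − ε. -/

import Mathlib

open Classical

open Matrix
open scoped ComplexOrder

noncomputable def msqrt {n : Type*} [Fintype n] [DecidableEq n] (A : Matrix n n ℂ) :
    Matrix n n ℂ :=
  if h : A.PosSemidef then
    (h.1.eigenvectorUnitary : Matrix n n ℂ) * diagonal ((↑) ∘ (√·) ∘ h.1.eigenvalues) *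
      (star h.1.eigenvectorUnitary : Matrix n n ℂ)
  else 0

/-- Uhlmann fidelity F_U(ρ,σ) = (Tr √(√σ ρ √σ))². -/
noncomputable def uFid {n : Type*} [Fintype n] [DecidableEq n] (ρ σ : Matrix n n ℂ) : ℝ :=
  ((msqrt (msqrt σ * ρ * msqrt σ)).trace.re) ^ 2

/-- Purified distance. -/
noncomputable def pDist {n : Type*} [Fintype n] [DecidableEq n] (ρ σ : Matrix n n ℂ) : ℝ :=
  Real.sqrt (1 - uFid ρ σ)

def IsDensity {n : Type*} [Fintype n] [DecidableEq n] (ρ : Matrix n n ℂ) : Prop :=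
  ρ.PosSemidef ∧ ρ.trace = 1

noncomputable def Dmax {n : Type*} [Fintype n] [DecidableEq n] (ρ σ : Matrix n n ℂ) : ℝ :=
  sInf {l : ℝ | (((2 : ℝ) ^ l) • σ - ρ).PosSemidef}

section Helpers

variable {ι : Type*} [Fintype ι] [DecidableEq ι]

lemma smul_posSemidef {c : ℂ} (hc : 0 ≤ c) {A : Matrix ι ι ℂ} (hA : A.PosSemidef) :
    (c • A).PosSemidef := by
  have hcs : star c = c := by
    rw [Complex.nonneg_iff] at hc
    simp [Complex.ext_iff, ← hc.2]
  refine Matrix.PosSemidef.of_dotProduct_mulVec_nonneg ?_ ?_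
  · rw [Matrix.IsHermitian, conjTranspose_smul, hcs, hA.1]
  · intro x
    rw [smul_mulVec, dotProduct_smul, smul_eq_mul]
    exact mul_nonneg hc (hA.dotProduct_mulVec_nonneg x)

lemma real_smul_matrix (c : ℝ) (A : Matrix ι ι ℂ) : c • A = (c : ℂ) • A := by
  ext i j; simp [Complex.real_smul]

lemma vecMulVec_posSemidef (φ : ι → ℂ) : (vecMulVec φ (star φ)).PosSemidef := by
  refine Matrix.PosSemidef.of_dotProduct_mulVec_nonneg ?_ ?_
  · ext i j
    simp [conjTranspose_apply, vecMulVec_apply, mul_comm]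
  · intro x
    have : star x ⬝ᵥ (vecMulVec φ (star φ)).mulVec x
        = star (star φ ⬝ᵥ x) * (star φ ⬝ᵥ x) := by
      simp only [dotProduct, mulVec, vecMulVec_apply, Pi.star_apply, star_sum, star_mul',
        star_star, Finset.mul_sum, Finset.sum_mul]
      rw [Finset.sum_comm]
      congr 1; ext i; congr 1; ext j; ring
    rw [this]
    exact star_mul_self_nonneg _
  
lemma vecMulVec_sandwich (φ : ι → ℂ) (ρ : Matrix ι ι ℂ) :
    vecMulVec φ (star φ) * ρ * vecMulVec φ (star φ)
      = (star φ ⬝ᵥ ρ.mulVec φ) • vecMulVec φ (star φ) := by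
  ext i j
  simp only [mul_apply, vecMulVec_apply, Pi.star_apply, Matrix.smul_apply, smul_eq_mul, dotProduct,
    mulVec, Finset.sum_mul, Finset.mul_sum]
  rw [Finset.sum_comm]
  congr 1; ext a; congr 1; ext b; ring

lemma trace_vecMulVec {φ : ι → ℂ} (hφ : star φ ⬝ᵥ φ = 1) :
    (vecMulVec φ (star φ)).trace = 1 := by
  rw [← hφ]
  simp [Matrix.trace, Matrix.diag, vecMulVec_apply, dotProduct, mul_comm]

lemma msqrt_eq_of_sq {A B : Matrix ι ι ℂ} (hA : A.PosSemidef) (hB : B.PosSemidef)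
    (h : B ^ 2 = A) : msqrt A = B := by
  have hB' : IsSelfAdjoint B := hB.1
  have e : msqrt A = cfc Real.sqrt A := by
    rw [msqrt, dif_pos hA, hA.1.cfc_eq, IsHermitian.cfc, Unitary.conjStarAlgAut_apply]
    rfl
  rw [e, ← h, ← cfc_comp_pow Real.sqrt 2 B]
  conv_rhs => rw [← cfc_id' ℝ B]
  refine cfc_congr ?_
  intro x hx
  rw [hB.1.spectrum_real_eq_range_eigenvalues] at hx
  obtain ⟨i, rfl⟩ := hx
  exact Real.sqrt_sq (hB.eigenvalues_nonneg i)

lemma msqrt_vecMulVec {φ : ι → ℂ} (hφ : star φ ⬝ᵥ φ = 1) :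
    msqrt (vecMulVec φ (star φ)) = vecMulVec φ (star φ) := by
  have hσ := vecMulVec_posSemidef φ
  have hsq : vecMulVec φ (star φ) ^ 2 = vecMulVec φ (star φ) := by
    have := vecMulVec_sandwich φ (1 : Matrix ι ι ℂ)
    simpa [pow_two, hφ] using this
  exact msqrt_eq_of_sq hσ hσ hsq

lemma uFid_pure {ρ : Matrix ι ι ℂ} (hρ : ρ.PosSemidef) {φ : ι → ℂ}
    (hφ : star φ ⬝ᵥ φ = 1) :
    uFid ρ (vecMulVec φ (star φ)) = (star φ ⬝ᵥ ρ.mulVec φ).re := by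
  set σ := vecMulVec φ (star φ) with hσdef
  have hσ := vecMulVec_posSemidef φ
  set c : ℂ := star φ ⬝ᵥ ρ.mulVec φ with hcdef
  have hc : 0 ≤ c := hρ.dotProduct_mulVec_nonneg φ
  have hcre : (c.re : ℂ) = c := by
    rw [Complex.nonneg_iff] at hc
    simp [Complex.ext_iff, ← hc.2]
  have hcre0 : 0 ≤ c.re := (Complex.nonneg_iff.mp hc).1
  have hsand : msqrt σ * ρ * msqrt σ = c • σ := by
    rw [msqrt_vecMulVec hφ, hσdef, vecMulVec_sandwich]
  have hσsq : σ ^ 2 = σ := by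
    have := vecMulVec_sandwich φ (1 : Matrix ι ι ℂ)
    simpa [pow_two, hφ, hσdef] using this
  have hr : ((Real.sqrt c.re : ℂ) • σ) ^ 2 = c • σ := by
    rw [smul_pow, hσsq, ← Complex.ofReal_pow, Real.sq_sqrt hcre0, hcre]
  have hrpsd : ((Real.sqrt c.re : ℂ) • σ).PosSemidef := by
    refine smul_posSemidef ?_ hσ
    rw [Complex.le_def]
    simp [Real.sqrt_nonneg]
  have hcσpsd : (c • σ).PosSemidef := smul_posSemidef hc hσ
  have hmsqrt : msqrt (c • σ) = (Real.sqrt c.re : ℂ) • σ := by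
    exact msqrt_eq_of_sq hcσpsd hrpsd hr
  rw [uFid, hsand, hmsqrt, trace_smul, trace_vecMulVec hφ]
  simp [Real.sq_sqrt hcre0]

lemma posSemidef_trace_nonneg {M : Matrix ι ι ℂ} (hM : M.PosSemidef) :
    0 ≤ M.trace := by
  rw [Matrix.trace]
  apply Finset.sum_nonneg
  intro i _
  have := hM.dotProduct_mulVec_nonneg (Pi.single i 1)
  simpa [dotProduct, mulVec, Pi.single_apply, Finset.sum_ite_eq, Finset.sum_ite_eq'] using this

lemma dmax_nonneg {ρ τ : Matrix ι ι ℂ} (hρ : IsDensity ρ) (hτ : IsDensity τ) :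
    0 ≤ Dmax ρ τ := by
  apply Real.sInf_nonneg
  intro l hl
  by_contra hneg
  push_neg at hneg
  have hlt : (2 : ℝ) ^ l < 1 := by
    calc (2:ℝ) ^ l < 2 ^ (0:ℝ) := by
          exact Real.rpow_lt_rpow_of_exponent_lt one_lt_two hneg
      _ = 1 := by norm_num
  have htr := posSemidef_trace_nonneg hl
  rw [trace_sub, real_smul_matrix, trace_smul, hρ.2, hτ.2, smul_eq_mul, mul_one,
    Complex.nonneg_iff] at htr
  have : (1:ℝ) ≤ (2:ℝ) ^ l := by
    have h := htr.1
    simpa using h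
  linarith

end Helpers

theorem convex_split_distillation {ι : Type*} [Fintype ι] [DecidableEq ι]
    (ρ τ : Matrix ι ι ℂ) (hρ : IsDensity ρ) (hτ : IsDensity τ)
    (φ : ι → ℂ) (hφ : star φ ⬝ᵥ φ = 1) (ε : ℝ) (hε : 0 < ε)
    (k : ℝ) (hk : k = Dmax ρ τ)
    (hclose : pDist τ (vecMulVec φ (star φ)) ≤ Real.sqrt ε / 2)
    (n : ℕ) (hn : (n : ℝ) ≥ 2 ^ (k + 2) / ε) :
    pDist (((n : ℝ))⁻¹ • ρ + (((n : ℝ) - 1) / n) • τ) (vecMulVec φ (star φ))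
        ≤ Real.sqrt ε ∧
    uFid (((n : ℝ))⁻¹ • ρ + (((n : ℝ) - 1) / n) • τ) (vecMulVec φ (star φ))
        ≥ 1 - ε := by
  have hk0 : 0 ≤ k := hk ▸ dmax_nonneg hρ hτ
  have h2k : (1:ℝ) ≤ 2 ^ k := by
    have := Real.rpow_le_rpow_of_exponent_le (one_le_two) hk0
    simpa using this
  have hpow : (2:ℝ) ^ (k+2) = 2 ^ k * 4 := by
    rw [Real.rpow_add two_pos]
    norm_num
  have hn4 : (4:ℝ)/ε ≤ n := by
    refine le_trans ?_ hn
    rw [hpow, div_le_div_iff₀ hε hε]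
    nlinarith
  have hn0 : (0:ℝ) < n := lt_of_lt_of_le (by positivity) hn4
  have hn1 : (1:ℝ) ≤ n := by
    rcases Nat.eq_zero_or_pos n with h | h
    · simp [h] at hn0
    · exact_mod_cast h
  have hninv : (n:ℝ)⁻¹ ≤ ε/4 := by
    rw [inv_eq_one_div, div_le_div_iff₀ hn0 (by norm_num : (0:ℝ) < 4)]
    calc (1:ℝ) * 4 = 4 := by ring
      _ ≤ ε * n := by
          rw [div_le_iff₀ hε] at hn4
          linarith [hn4]
      _ = ε * n := rfl
  -- fidelities
  set Fρ : ℝ := (star φ ⬝ᵥ ρ.mulVec φ).re with hFρdef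
  set Fτ : ℝ := (star φ ⬝ᵥ τ.mulVec φ).re with hFτdef
  have hFρ0 : 0 ≤ Fρ := (Complex.nonneg_iff.mp (hρ.1.dotProduct_mulVec_nonneg φ)).1
  have hFτeq : uFid τ (vecMulVec φ (star φ)) = Fτ := uFid_pure hτ.1 hφ
  have hFτ : 1 - Fτ ≤ ε/4 := by
    rw [pDist, hFτeq] at hclose
    rcases le_or_gt (1 - Fτ) 0 with h | h
    · linarith
    · nlinarith [Real.sq_sqrt h.le, Real.sqrt_nonneg (1 - Fτ),
        Real.sq_sqrt hε.le, Real.sqrt_nonneg ε]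
  -- the mixed state
  have hApsd : (((n : ℝ))⁻¹ • ρ + (((n : ℝ) - 1) / n) • τ).PosSemidef := by
    rw [real_smul_matrix, real_smul_matrix]
    refine Matrix.PosSemidef.add (smul_posSemidef ?_ hρ.1) (smul_posSemidef ?_ hτ.1)
    · rw [Complex.le_def]; constructor <;> simp [inv_nonneg.mpr hn0.le]
    · rw [Complex.le_def]; constructor <;>
        simp [div_nonneg (by linarith : (0:ℝ) ≤ (n:ℝ) - 1) hn0.le]
  have hFn : uFid (((n : ℝ))⁻¹ • ρ + (((n : ℝ) - 1) / n) • τ) (vecMulVec φ (star φ))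
      = (n:ℝ)⁻¹ * Fρ + (((n:ℝ) - 1)/n) * Fτ := by
    rw [uFid_pure hApsd hφ]
    simp [add_mulVec, smul_mulVec, dotProduct_add, dotProduct_smul,
      Complex.real_smul, hFρdef, hFτdef]
  have hsplit : ((n:ℝ) - 1)/n = 1 - (n:ℝ)⁻¹ := by
    field_simp
  have hge : uFid (((n : ℝ))⁻¹ • ρ + (((n : ℝ) - 1) / n) • τ) (vecMulVec φ (star φ))
      ≥ 1 - ε := by
    rw [hFn, hsplit]
    have h1 : 0 ≤ 1 - (n:ℝ)⁻¹ := by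
      have : (n:ℝ)⁻¹ ≤ 1 := by
        rw [inv_le_one_iff₀]; right; exact hn1
      linarith
    nlinarith [mul_le_mul_of_nonneg_left hFτ h1, mul_nonneg (inv_nonneg.mpr hn0.le) hFρ0,
      mul_nonneg (inv_nonneg.mpr hn0.le) hε.le]
  refine ⟨?_, hge⟩
  rw [pDist]
  calc Real.sqrt (1 - uFid (((n : ℝ))⁻¹ • ρ + (((n : ℝ) - 1) / n) • τ) (vecMulVec φ (star φ)))
      ≤ Real.sqrt ε := Real.sqrt_le_sqrt (by linarith)
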